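/- For all homogeneous x, y, z, w ∈ H^*(C), the following identity holds in C: (−1)^{|x|} s(x) Θ(y,z,w) − Θ(xy,z,w) + Θ(x,yz,w) − Θ(x,y,zw) + Θ(x,y,z) s(w) = (−1)^{|x|+|y|} d( q(x,y) q(z,w) ). -/

import Mathlib

/-- `Qmap s q x y` is the cochain `q(x,y) := q(s(x)s(y) - s(xy))`. -/
def Qmap {k C H : Type} [CommRing k] [Ring C] [Algebra k C] [Ring H] [Algebra k H]
    (s : H →ₗ[k] C) (q : C → C) (x y : H) : C :=
  q (s x * s y - s (x * y))

/-- `Theta s q i x y z` is the expression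
`Θ(x,y,z) = (-1)^{|x|} s(x) q(y,z) - q(xy,z) + q(x,yz) - q(x,y) s(z)`,
where `i = |x|` is the degree of `x`. -/
def Theta {k C H : Type} [CommRing k] [Ring C] [Algebra k C] [Ring H] [Algebra k H]
    (s : H →ₗ[k] C) (q : C → C) (i : ℕ) (x y z : H) : C :=
  ((-1 : ℤ) ^ i) • (s x * Qmap s q y z) - Qmap s q (x * y) z
    + Qmap s q x (y * z) - Qmap s q x y * s z

/-- Purely algebraic cancellation identity underlying the theorem. -/
lemma key_identity {C : Type} [Ring C] (e1 e2 : ℤ) (h1 : e1 = 1 ∨ e1 = -1)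
    (h2 : e2 = 1 ∨ e2 = -1)
    (a b ab c dd cd Q1 Q2 Q3 Q4 Q5 Q6 Q7 Q8 Q9 Q10 : C) :
    e1 • (a * (e2 • (b * Q2) - Q3 + Q4 - Q1 * dd))
      - ((e1 * e2) • (ab * Q2) - Q6 + Q7 - Q5 * dd)
      + (e1 • (a * Q3) - Q6 + Q8 - Q9 * dd)
      - (e1 • (a * Q4) - Q7 + Q8 - Q10 * cd)
      + (e1 • (a * Q1) - Q5 + Q9 - Q10 * c) * dd
      = (e1 * e2) • ((a * b - ab) * Q2) - Q10 * (c * dd - cd) := by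
  rcases h1 with rfl | rfl <;> rcases h2 with rfl | rfl <;>
    simp only [one_smul, neg_smul, one_mul, mul_one, neg_neg, neg_mul, mul_neg] <;> noncomm_ring

/-- An exact element of degree `0` is zero (the differential raises degree). -/
lemma exact_degzero {k C : Type} [CommRing k] [Ring C] [Algebra k C] (𝒜 : ℕ → Submodule k C)
    [GradedAlgebra 𝒜] (d : C →ₗ[k] C) (hddeg : ∀ i, ∀ x ∈ 𝒜 i, d x ∈ 𝒜 (i + 1))
    (y : C) (h : d y ∈ 𝒜 0) : d y = 0 := by
  classical
  have h2 : d y = ∑ n ∈ (DirectSum.decompose 𝒜 y).support, d (DirectSum.decompose 𝒜 y n : C) := by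
    conv_lhs => rw [← DirectSum.sum_support_decompose 𝒜 y]
    rw [map_sum]
  have h4 : (DirectSum.decompose 𝒜 (d y) 0 : C) = 0 := by
    rw [h2, DirectSum.decompose_sum, DFinsupp.finset_sum_apply]
    push_cast
    refine Finset.sum_eq_zero fun n _ => ?_
    rw [DirectSum.decompose_of_mem_ne 𝒜 (hddeg n _ (SetLike.coe_mem _)) (Nat.succ_ne_zero n)]
  rw [← DirectSum.decompose_of_mem_same 𝒜 h, h4]

/-- For homogeneous `x, y, z, w ∈ H^*(C)`,
`δₛΘ(x,y,z,w) = (-1)^{|x|+|y|} d(q(x,y) q(z,w))` in `C`. -/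
theorem delta_s_Theta (k : Type) [CommRing k]
    (C : Type) [Ring C] [Algebra k C]
    (𝒜 : ℕ → Submodule k C) [GradedAlgebra 𝒜]
    (d : C →ₗ[k] C)
    (hd2 : ∀ x : C, d (d x) = 0)
    (hddeg : ∀ (i : ℕ), ∀ x ∈ 𝒜 i, d x ∈ 𝒜 (i + 1))
    (hleib : ∀ (i : ℕ), ∀ x ∈ 𝒜 i, ∀ y : C,
      d (x * y) = d x * y + ((-1 : ℤ) ^ i) • (x * d y))
    (H : Type) [Ring H] [Algebra k H]
    (ℋ : ℕ → Submodule k H) [GradedAlgebra ℋ]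
    (π : C → H)
    (hπadd : ∀ x y : C, d x = 0 → d y = 0 → π (x + y) = π x + π y)
    (hπsmul : ∀ (a : k) (x : C), d x = 0 → π (a • x) = a • π x)
    (hπmul : ∀ x y : C, d x = 0 → d y = 0 → π (x * y) = π x * π y)
    (hπone : π 1 = 1)
    (hπdeg : ∀ (i : ℕ), ∀ x ∈ 𝒜 i, d x = 0 → π x ∈ ℋ i)
    (hπker : ∀ x : C, d x = 0 → (π x = 0 ↔ ∃ y : C, d y = x))
    (hπsurj : ∀ h : H, ∃ x : C, d x = 0 ∧ π x = h)
    (s : H →ₗ[k] C)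
    (hs0 : ∀ h : H, d (s h) = 0)
    (hsπ : ∀ h : H, π (s h) = h)
    (hsdeg : ∀ (i : ℕ), ∀ h ∈ ℋ i, s h ∈ 𝒜 i)
    (q : C → C)
    (hqd : ∀ x : C, (∃ y, d y = x) → d (q x) = x)
    (hqadd : ∀ x y : C, (∃ u, d u = x) → (∃ v, d v = y) → q (x + y) = q x + q y)
    (hqsmul : ∀ (a : k) (x : C), (∃ y, d y = x) → q (a • x) = a • q x)
    (hqdeg : ∀ (i : ℕ), ∀ x : C, (∃ y, d y = x) → x ∈ 𝒜 (i + 1) → q x ∈ 𝒜 i)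
    :
    ∀ (i j l m : ℕ) (x y z w : H), x ∈ ℋ i → y ∈ ℋ j → z ∈ ℋ l → w ∈ ℋ m →
      ((-1 : ℤ) ^ i) • (s x * Theta s q j y z w) - Theta s q (i + j) (x * y) z w
          + Theta s q i x (y * z) w - Theta s q i x y (z * w)
          + Theta s q i x y z * s w
        = ((-1 : ℤ) ^ (i + j)) • d (Qmap s q x y * Qmap s q z w) := by
  intro i j l m x y z w hx hy hz hw
  -- `s x * s y - s (x*y)` is a cocycle
  have hclosed : ∀ (i : ℕ) (x y : H), x ∈ ℋ i → d (s x * s y - s (x * y)) = 0 := by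
    intro i x y hx
    rw [map_sub, hleib i (s x) (hsdeg i x hx) (s y), hs0, hs0, hs0]
    simp
  -- `s x * s y - s (x*y)` is exact
  have hexact : ∀ (i : ℕ) (x y : H), x ∈ ℋ i → ∃ u, d u = s x * s y - s (x * y) := by
    intro i x y hx
    apply (hπker _ (hclosed i x y hx)).mp
    have h1 := hπadd _ _ (hclosed i x y hx) (hs0 (x * y))
    rw [sub_add_cancel, hπmul _ _ (hs0 x) (hs0 y), hsπ, hsπ, hsπ] at h1
    exact (right_eq_add.mp h1)
  have hdQ : ∀ (i : ℕ) (x y : H), x ∈ ℋ i →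
      d (Qmap s q x y) = s x * s y - s (x * y) := by
    intro i x y hx
    exact hqd _ (hexact i x y hx)
  have he1 : ((-1 : ℤ) ^ i = 1) ∨ ((-1 : ℤ) ^ i = -1) :=
    (Nat.even_or_odd i).imp Even.neg_one_pow Odd.neg_one_pow
  have he2 : ((-1 : ℤ) ^ j = 1) ∨ ((-1 : ℤ) ^ j = -1) :=
    (Nat.even_or_odd j).imp Even.neg_one_pow Odd.neg_one_pow
  simp only [Theta, pow_add]
  rw [← mul_assoc x y z, ← mul_assoc y z w]
  rw [key_identity ((-1 : ℤ) ^ i) ((-1 : ℤ) ^ j) he1 he2 (s x) (s y) (s (x * y)) (s z) (s w)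
    (s (z * w)) (Qmap s q y z) (Qmap s q z w) (Qmap s q (y * z) w) (Qmap s q y (z * w))
    (Qmap s q (x * y) z) (Qmap s q (x * y * z) w) (Qmap s q (x * y) (z * w))
    (Qmap s q x (y * z * w)) (Qmap s q x (y * z)) (Qmap s q x y)]
  cases hn : i + j with
  | zero =>
    obtain ⟨rfl, rfl⟩ := Nat.add_eq_zero.mp hn
    obtain ⟨u, hu⟩ := hexact 0 x y hx
    have h0 : s x * s y - s (x * y) = 0 := by
      rw [← hu]
      exact exact_degzero 𝒜 d hddeg u (by
        rw [hu]
        exact sub_mem (SetLike.mul_mem_graded (hsdeg 0 x hx) (hsdeg 0 y hy))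
          (hsdeg 0 (x * y) (SetLike.mul_mem_graded hx hy)))
    have hq0 : q (0 : C) = 0 := by
      have := hqadd 0 0 ⟨0, map_zero d⟩ ⟨0, map_zero d⟩
      simpa using this
    have hQ0 : Qmap s q x y = 0 := by rw [Qmap, h0, hq0]
    rw [h0, hQ0]
    simp
  | succ n =>
    have hmemQ : Qmap s q x y ∈ 𝒜 n := by
      refine hqdeg n _ (hexact i x y hx) ?_
      have : s x * s y - s (x * y) ∈ 𝒜 (i + j) :=
        sub_mem (SetLike.mul_mem_graded (hsdeg i x hx) (hsdeg j y hy))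
          (hsdeg (i + j) (x * y) (SetLike.mul_mem_graded hx hy))
      rwa [hn] at this
    rw [hleib n _ hmemQ (Qmap s q z w), hdQ i x y hx, hdQ l z w hz, smul_add, smul_smul]
    have hsign : (-1 : ℤ) ^ i * (-1 : ℤ) ^ j * (-1 : ℤ) ^ n = -1 := by
      rw [← pow_add, ← pow_add, hn]
      exact Odd.neg_one_pow ⟨n, by ring⟩
    rw [hsign, neg_one_zsmul]
    abel
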